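/- (Local one-step evaluation.) Let π_L be the policy equal to the behavior policy π_b at all times except time L, where it follows a memoryless evaluation policy π_e(a|z). If P^b(Z_L | a_L, Z_{L-1}) and P^b(U_L | a_L, Z_{L-1}) are invertible square matrices for every action a_L, then P^{π_L}(r_L) = Σ_{z_L, a_L} π_e(a_L | z_L) · P^b(r_L, z_L | a_L, Z_{L-1}) · W_L(a_L), where W_L(a_L) = P^b(Z_L | a_L, Z_{L-1})^{-1}·P^b(Z_L) and P^b(r_L, z_L | a_L, Z_{L-1}) is the row vector with entries P^b(r_L, z_L | a_L, z_{L-1}). -/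
import Mathlib


open Finset Matrix
open scoped Classical

noncomputable def Pr {Ω : Type*} [Fintype Ω] (μ : Ω → ℝ) (E : Ω → Prop) : ℝ :=
  ∑ ω, if E ω then μ ω else 0

noncomputable def cPr {Ω : Type*} [Fintype Ω] (μ : Ω → ℝ) (E F : Ω → Prop) : ℝ :=
  Pr μ (fun ω => E ω ∧ F ω) / Pr μ F

section Helpers

variable {Ω : Type*} [Fintype Ω] (μ : Ω → ℝ)

lemma Pr_congr {E F : Ω → Prop} (h : ∀ ω, E ω ↔ F ω) : Pr μ E = Pr μ F := by
  unfold Pr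
  exact Finset.sum_congr rfl fun ω _ => by rw [show E ω ↔ F ω from h ω]

lemma cPr_congr {E E' F F' : Ω → Prop} (hE : ∀ ω, E ω ↔ E' ω) (hF : ∀ ω, F ω ↔ F' ω) :
    cPr μ E F = cPr μ E' F' := by
  unfold cPr
  rw [Pr_congr μ (E := fun ω => E ω ∧ F ω) (F := fun ω => E' ω ∧ F' ω)
      (fun ω => and_congr (hE ω) (hF ω)), Pr_congr μ hF]

lemma Pr_nonneg (hμ : ∀ ω, 0 ≤ μ ω) (E : Ω → Prop) : 0 ≤ Pr μ E :=
  Finset.sum_nonneg fun ω _ => by by_cases h : E ω <;> simp [h, hμ ω]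

lemma Pr_mono (hμ : ∀ ω, 0 ≤ μ ω) (E F : Ω → Prop) :
    Pr μ (fun ω => E ω ∧ F ω) ≤ Pr μ F :=
  Finset.sum_le_sum fun ω _ => by
    by_cases h1 : E ω <;> by_cases h2 : F ω <;> simp [h1, h2, hμ ω]

lemma cPr_mul (hμ : ∀ ω, 0 ≤ μ ω) (E F : Ω → Prop) :
    cPr μ E F * Pr μ F = Pr μ (fun ω => E ω ∧ F ω) := by
  by_cases h : Pr μ F = 0
  · rw [h, mul_zero]
    have h1 := Pr_mono μ hμ E F
    have h2 := Pr_nonneg μ hμ (fun ω => E ω ∧ F ω)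
    linarith
  · exact div_mul_cancel₀ _ h

lemma Pr_partition {β : Type*} [Fintype β] (g : Ω → β) (F : Ω → Prop) :
    Pr μ F = ∑ u : β, Pr μ (fun ω => g ω = u ∧ F ω) := by
  unfold Pr
  rw [Finset.sum_comm]
  refine Finset.sum_congr rfl fun ω _ => ?_
  by_cases hF : F ω <;> simp [hF]

lemma Pr_partition_image (g : Ω → ℝ) (F : Ω → Prop) :
    Pr μ F = ∑ ρ' ∈ Finset.image g Finset.univ, Pr μ (fun ω => g ω = ρ' ∧ F ω) := by
  unfold Pr
  rw [Finset.sum_comm]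
  refine Finset.sum_congr rfl fun ω _ => ?_
  by_cases hF : F ω
  · simp only [hF, and_true]
    rw [Finset.sum_ite_eq (Finset.image g Finset.univ) (g ω) (fun _ => μ ω)]
    simp
  · simp [hF]

/-- Law of total probability for conditional probabilities. -/
lemma cPr_total {Uty : Type*} [Fintype Uty] (hμ : ∀ ω, 0 ≤ μ ω)
    (E F : Ω → Prop) (g : Ω → Uty) (c : Uty → ℝ)
    (hc : ∀ u, Pr μ (fun ω => E ω ∧ g ω = u ∧ F ω)
        = c u * Pr μ (fun ω => g ω = u ∧ F ω)) :
    cPr μ E F = ∑ u : Uty, c u * cPr μ (fun ω => g ω = u) F := by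
  unfold cPr
  have h1 : Pr μ (fun ω => E ω ∧ F ω)
      = ∑ u : Uty, Pr μ (fun ω => E ω ∧ g ω = u ∧ F ω) := by
    rw [Pr_partition μ g (fun ω => E ω ∧ F ω)]
    exact Finset.sum_congr rfl fun u _ => Pr_congr μ (fun ω => by tauto)
  rw [h1]
  rw [Finset.sum_div]
  refine Finset.sum_congr rfl fun u _ => ?_
  rw [hc u, mul_div_assoc]

/-- Splitting a conditional probability over the (finite) range of a real function. -/
lemma cPr_split (E F : Ω → Prop) (g : Ω → ℝ) :
    cPr μ E F = ∑ ρ' ∈ Finset.image g Finset.univ,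
      cPr μ (fun ω => g ω = ρ' ∧ E ω) F := by
  unfold cPr
  rw [← Finset.sum_div]
  congr 1
  rw [Pr_partition_image μ g (fun ω => E ω ∧ F ω)]
  exact Finset.sum_congr rfl fun ρ' _ => Pr_congr μ (fun ω => by tauto)

end Helpers

/-- Proposition 1, local one-step evaluation: with `π_L` following the
behavior policy up to time `L-1` and the memoryless evaluation policy `π_e(a|z)` at time
`L`, so that `P^{π_L}(r_L) = Σ_{z_L,a_L,u_L} π_e(a_L|z_L) P^b(r_L, z_L|a_L, u_L) P^b(u_L)`,
if `P^b(Z_L|a_L,Z_{L-1})` and `P^b(U_L|a_L,Z_{L-1})` are invertible for every `a_L` then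
`P^{π_L}(r_L) = Σ_{z_L,a_L} π_e(a_L|z_L) · P^b(r_L, z_L|a_L, Z_{L-1}) · W_L(a_L)` where
`W_L(a_L) = P^b(Z_L|a_L,Z_{L-1})⁻¹ P^b(Z_L)`. Here `|Z| = |U|` (both value sets indexed
by the same finite type would be `Fin n`; we index `u` by `Uty` and `z` by `Zty` and
express invertibility of the rectangular matrix by a two-sided inverse). -/
theorem local_one_step_evaluation
    {Ω : Type*} [Fintype Ω] (μ : Ω → ℝ)
    {Uty Zty Aty : Type*} [Fintype Uty] [Fintype Zty] [Fintype Aty] [DecidableEq Zty]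
    (uL : Ω → Uty) (zL zLm1 : Ω → Zty) (aL : Ω → Aty) (rL : Ω → ℝ)
    (hμ : ∀ ω, 0 ≤ μ ω) (hsum : ∑ ω, μ ω = 1)
    (hcard : Fintype.card Zty = Fintype.card Uty)
    (πe : Zty → Aty → ℝ)
    -- positivity of conditioning events
    (hposu : ∀ (av : Aty) (uv : Uty), 0 < Pr μ (fun ω => aL ω = av ∧ uL ω = uv))
    (hposz : ∀ (av : Aty) (zp : Zty), 0 < Pr μ (fun ω => aL ω = av ∧ zLm1 ω = zp))
    (hposU : ∀ uv : Uty, 0 < Pr μ (fun ω => uL ω = uv))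
    -- z_{L-1} ⊥ (r_L, z_L) | (a_L, u_L)
    (hCI1 : ∀ (ρ : ℝ) (zv zp : Zty) (av : Aty) (uv : Uty),
      cPr μ (fun ω => rL ω = ρ ∧ zL ω = zv)
          (fun ω => aL ω = av ∧ uL ω = uv ∧ zLm1 ω = zp) =
        cPr μ (fun ω => rL ω = ρ ∧ zL ω = zv) (fun ω => aL ω = av ∧ uL ω = uv))
    -- z_L ⊥ a_L | u_L
    (hCI2 : ∀ (zv : Zty) (av : Aty) (uv : Uty),
      cPr μ (fun ω => zL ω = zv) (fun ω => aL ω = av ∧ uL ω = uv) =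
        cPr μ (fun ω => zL ω = zv) (fun ω => uL ω = uv))
    -- invertibility of P^b(Z_L | a_L, Z_{L-1}) for every a_L
    (hinvZ : ∀ av : Aty, IsUnit (Matrix.of fun (zc zp : Zty) =>
      cPr μ (fun ω => zL ω = zc) (fun ω => aL ω = av ∧ zLm1 ω = zp)).det)
    -- invertibility of P^b(U_L | a_L, Z_{L-1}) for every a_L
    (hinvU : ∀ av : Aty, ∃ B : Matrix Zty Uty ℝ,
      (Matrix.of fun (uv : Uty) (zp : Zty) =>
        cPr μ (fun ω => uL ω = uv) (fun ω => aL ω = av ∧ zLm1 ω = zp)) * B = 1 ∧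
      B * (Matrix.of fun (uv : Uty) (zp : Zty) =>
        cPr μ (fun ω => uL ω = uv) (fun ω => aL ω = av ∧ zLm1 ω = zp)) = 1)
    (ρ : ℝ) :
    -- P^{π_L}(r_L)
    (∑ zv : Zty, ∑ av : Aty, ∑ uv : Uty,
        πe zv av *
          cPr μ (fun ω => rL ω = ρ ∧ zL ω = zv) (fun ω => aL ω = av ∧ uL ω = uv) *
          Pr μ (fun ω => uL ω = uv)) =
      ∑ zv : Zty, ∑ av : Aty,
        πe zv av *
          ((fun zp : Zty =>
              cPr μ (fun ω => rL ω = ρ ∧ zL ω = zv)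
                (fun ω => aL ω = av ∧ zLm1 ω = zp)) ⬝ᵥ
            ((Matrix.of fun (zc zp : Zty) =>
                cPr μ (fun ω => zL ω = zc) (fun ω => aL ω = av ∧ zLm1 ω = zp))⁻¹ *ᵥ
              fun zc : Zty => Pr μ (fun ω => zL ω = zc))) := by
  -- abbreviations
  set Cm : Matrix Zty Uty ℝ :=
    Matrix.of fun zc uv => cPr μ (fun ω => zL ω = zc) (fun ω => uL ω = uv) with hCm
  set hvec : Uty → ℝ := fun uv => Pr μ (fun ω => uL ω = uv) with hhvec
  set gvec : Zty → ℝ := fun zc => Pr μ (fun ω => zL ω = zc) with hgvec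
  refine Finset.sum_congr rfl fun zv _ => Finset.sum_congr rfl fun av _ => ?_
  set Nm : Matrix Uty Zty ℝ :=
    Matrix.of fun uv zp =>
      cPr μ (fun ω => uL ω = uv) (fun ω => aL ω = av ∧ zLm1 ω = zp) with hNm
  set Mm : Matrix Zty Zty ℝ :=
    Matrix.of fun zc zp =>
      cPr μ (fun ω => zL ω = zc) (fun ω => aL ω = av ∧ zLm1 ω = zp) with hMm
  set q : Uty → ℝ := fun uv =>
    cPr μ (fun ω => rL ω = ρ ∧ zL ω = zv) (fun ω => aL ω = av ∧ uL ω = uv) with hq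
  obtain ⟨B, hB1, hB2⟩ := hinvU av
  -- Step 2 : Mm = Cm * Nm
  have hM : Mm = Cm * Nm := by
    ext zc zp
    rw [Matrix.mul_apply]
    simp only [hMm, hCm, hNm, Matrix.of_apply]
    refine cPr_total μ hμ _ _ uL _ fun u => ?_
    have hX : Pr μ (fun ω => uL ω = u ∧ aL ω = av ∧ zLm1 ω = zp)
        = Pr μ (fun ω => aL ω = av ∧ uL ω = u ∧ zLm1 ω = zp) :=
      Pr_congr μ (fun ω => by tauto)
    have hnum : Pr μ (fun ω => zL ω = zc ∧ uL ω = u ∧ aL ω = av ∧ zLm1 ω = zp)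
        = Pr μ (fun ω => zL ω = zc ∧ aL ω = av ∧ uL ω = u ∧ zLm1 ω = zp) :=
      Pr_congr μ (fun ω => by tauto)
    rw [hnum, hX,
      ← cPr_mul μ hμ (fun ω => zL ω = zc) (fun ω => aL ω = av ∧ uL ω = u ∧ zLm1 ω = zp)]
    congr 1
    -- cPr (zL = zc | aL, uL, zLm1) = cPr (zL = zc | uL)
    calc cPr μ (fun ω => zL ω = zc) (fun ω => aL ω = av ∧ uL ω = u ∧ zLm1 ω = zp)
        = ∑ ρ' ∈ Finset.image rL Finset.univ,
            cPr μ (fun ω => rL ω = ρ' ∧ zL ω = zc)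
              (fun ω => aL ω = av ∧ uL ω = u ∧ zLm1 ω = zp) :=
          cPr_split μ _ _ rL
      _ = ∑ ρ' ∈ Finset.image rL Finset.univ,
            cPr μ (fun ω => rL ω = ρ' ∧ zL ω = zc)
              (fun ω => aL ω = av ∧ uL ω = u) :=
          Finset.sum_congr rfl fun ρ' _ => hCI1 ρ' zc zp av u
      _ = cPr μ (fun ω => zL ω = zc) (fun ω => aL ω = av ∧ uL ω = u) :=
          (cPr_split μ _ _ rL).symm
      _ = cPr μ (fun ω => zL ω = zc) (fun ω => uL ω = u) := hCI2 zc av u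
  -- Step 3 : gvec = Cm *ᵥ hvec
  have hg : gvec = Cm *ᵥ hvec := by
    funext zc
    rw [Matrix.mulVec, dotProduct]
    simp only [hgvec, hCm, hhvec, Matrix.of_apply]
    rw [Pr_partition μ uL (fun ω => zL ω = zc)]
    refine Finset.sum_congr rfl fun u _ => ?_
    exact (Pr_congr μ (fun ω => by tauto)).trans
      (cPr_mul μ hμ (fun ω => zL ω = zc) (fun ω => uL ω = u)).symm
  -- Mm⁻¹ *ᵥ gvec = B *ᵥ hvec
  have hC : Cm = Mm * B := by
    rw [hM, Matrix.mul_assoc, hB1, Matrix.mul_one]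
  have hWL : Mm⁻¹ *ᵥ gvec = B *ᵥ hvec := by
    rw [hg, Matrix.mulVec_mulVec, hC, ← Matrix.mul_assoc,
      Matrix.nonsing_inv_mul Mm (hinvZ av), Matrix.one_mul]
  -- Step 1 : the row vector equals q ᵥ* Nm
  have hf : (fun zp : Zty =>
      cPr μ (fun ω => rL ω = ρ ∧ zL ω = zv) (fun ω => aL ω = av ∧ zLm1 ω = zp))
      = q ᵥ* Nm := by
    funext zp
    rw [Matrix.vecMul, dotProduct]
    simp only [hq, hNm, Matrix.of_apply]
    refine cPr_total μ hμ _ _ uL _ fun u => ?_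
    have hX : Pr μ (fun ω => uL ω = u ∧ aL ω = av ∧ zLm1 ω = zp)
        = Pr μ (fun ω => aL ω = av ∧ uL ω = u ∧ zLm1 ω = zp) :=
      Pr_congr μ (fun ω => by tauto)
    have hnum : Pr μ (fun ω => (rL ω = ρ ∧ zL ω = zv) ∧ uL ω = u ∧ aL ω = av ∧ zLm1 ω = zp)
        = Pr μ (fun ω => (rL ω = ρ ∧ zL ω = zv) ∧ aL ω = av ∧ uL ω = u ∧ zLm1 ω = zp) :=
      Pr_congr μ (fun ω => by tauto)
    rw [hnum, hX, ← cPr_mul μ hμ (fun ω => rL ω = ρ ∧ zL ω = zv)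
      (fun ω => aL ω = av ∧ uL ω = u ∧ zLm1 ω = zp)]
    congr 1
    exact hCI1 ρ zv zp av u
  rw [hWL, hf, Matrix.dotProduct_mulVec, Matrix.vecMul_vecMul, hB1, Matrix.vecMul_one]
  rw [dotProduct, Finset.mul_sum]
  refine Finset.sum_congr rfl fun u _ => ?_
  simp only [hq, hhvec]
  ring
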